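/- If f ∈ ℂ[h] satisfies f(h) ∈ h·ℂ[h] and deg f ≠ 1, then the left ideals I_n = Σ_{i=0}^n H(f)·h y^i of H(f) form a strictly ascending chain: h y^{n+1} ∉ I_n for all n ≥ 0. -/

import Mathlib

open Polynomial MulOpposite

noncomputable section

/-- Defining relations of the generalized Heisenberg algebra H(f):
generators x (index 0), y (index 1), h (index 2) with
h*x = x*f(h), y*h = f(h)*y, y*x = x*y + (f(h) - h). -/
inductive HeisRel (f : ℂ[X]) : FreeAlgebra ℂ (Fin 3) → FreeAlgebra ℂ (Fin 3) → Prop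
  | hx : HeisRel f (FreeAlgebra.ι ℂ 2 * FreeAlgebra.ι ℂ 0)
      (FreeAlgebra.ι ℂ 0 * aeval (FreeAlgebra.ι ℂ 2) f)
  | yh : HeisRel f (FreeAlgebra.ι ℂ 1 * FreeAlgebra.ι ℂ 2)
      (aeval (FreeAlgebra.ι ℂ 2) f * FreeAlgebra.ι ℂ 1)
  | yx : HeisRel f (FreeAlgebra.ι ℂ 1 * FreeAlgebra.ι ℂ 0)
      (FreeAlgebra.ι ℂ 0 * FreeAlgebra.ι ℂ 1 + (aeval (FreeAlgebra.ι ℂ 2) f - FreeAlgebra.ι ℂ 2))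

/-- The generalized Heisenberg algebra H(f). -/
abbrev GHA (f : ℂ[X]) := RingQuot (HeisRel f)

def ghaX (f : ℂ[X]) : GHA f := RingQuot.mkAlgHom ℂ (HeisRel f) (FreeAlgebra.ι ℂ 0)
def ghaY (f : ℂ[X]) : GHA f := RingQuot.mkAlgHom ℂ (HeisRel f) (FreeAlgebra.ι ℂ 1)
def ghaH (f : ℂ[X]) : GHA f := RingQuot.mkAlgHom ℂ (HeisRel f) (FreeAlgebra.ι ℂ 2)

/-- k-th compositional power of σ applied to h, as a polynomial: σ^k(h). -/
def sigmaIter (f : ℂ[X]) : ℕ → ℂ[X]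
  | 0 => X
  | k + 1 => (sigmaIter f k).comp f

/-! ### Auxiliary construction: a representation of H(f) -/

namespace GHAaux

/-- The representation space: finitely supported families of polynomials indexed by
pairs (row, column), modelling the PBW basis `x^a h^j y^k ↦ (a, k) ↦ h^j`. -/
abbrev V : Type := (ℕ × ℕ) →₀ ℂ[X]

variable (f : ℂ[X])

/-- Composition with `f` as a linear map. -/
def compF : ℂ[X] →ₗ[ℂ] ℂ[X] where
  toFun p := p.comp f
  map_add' p q := Polynomial.add_comp
  map_smul' c p := Polynomial.smul_comp c p f

@[simp] lemma compF_apply (p : ℂ[X]) : compF f p = p.comp f := rfl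

/-- x acts by shifting the row index up. -/
def Xop : Module.End ℂ V := Finsupp.lsum ℂ fun c => Finsupp.lsingle (c.1 + 1, c.2)

/-- h acts on row a by multiplication by σ^a. -/
def Hop : Module.End ℂ V :=
  Finsupp.lsum ℂ fun c => (Finsupp.lsingle c) ∘ₗ (LinearMap.mulLeft ℂ (sigmaIter f c.1))

/-- The correction part of the action of y. -/
def Yaux : ℕ × ℕ → (ℂ[X] →ₗ[ℂ] V)
  | (0, _) => 0
  | (a + 1, k) => (Finsupp.lsingle (a, k)) ∘ₗ (LinearMap.mulLeft ℂ (sigmaIter f (a + 1) - X))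

/-- y acts by `y · x^a p(h) y^k = x^a (p∘f)(h) y^(k+1) + x^(a-1) (σ^a(h) - h) p(h) y^k`. -/
def Yop : Module.End ℂ V :=
  Finsupp.lsum ℂ fun c => ((Finsupp.lsingle (c.1, c.2 + 1)) ∘ₗ compF f) + Yaux f c

@[simp] lemma Xop_single (a k : ℕ) (p : ℂ[X]) :
    Xop (Finsupp.single (a, k) p) = Finsupp.single (a + 1, k) p := by
  simp [Xop, Finsupp.lsum_single]

@[simp] lemma Hop_single (a k : ℕ) (p : ℂ[X]) :
    Hop f (Finsupp.single (a, k) p) = Finsupp.single (a, k) (sigmaIter f a * p) := by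
  simp [Hop, Finsupp.lsum_single]

@[simp] lemma Yop_single_zero (k : ℕ) (p : ℂ[X]) :
    Yop f (Finsupp.single (0, k) p) = Finsupp.single (0, k + 1) (p.comp f) := by
  simp [Yop, Yaux, Finsupp.lsum_single]

@[simp] lemma Yop_single_succ (a k : ℕ) (p : ℂ[X]) :
    Yop f (Finsupp.single (a + 1, k) p) =
      Finsupp.single (a + 1, k + 1) (p.comp f) +
        Finsupp.single (a, k) ((sigmaIter f (a + 1) - X) * p) := by
  simp [Yop, Yaux, Finsupp.lsum_single]

lemma sigma_succ (a : ℕ) : sigmaIter f (a + 1) = (sigmaIter f a).comp f := rfl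

lemma sigma_one : sigmaIter f 1 = f := Polynomial.X_comp

lemma sigma_succ' (a : ℕ) : sigmaIter f (a + 1) = f.comp (sigmaIter f a) := by
  induction a with
  | zero => simp [sigmaIter]
  | succ s ih =>
    show (sigmaIter f (s + 1)).comp f = _
    conv_lhs => rw [ih]
    rw [Polynomial.comp_assoc]
    rfl

lemma X_dvd_sigma (hdvd : X ∣ f) (a : ℕ) : X ∣ sigmaIter f a := by
  induction a with
  | zero => exact dvd_rfl
  | succ s ih =>
    obtain ⟨w, hw⟩ := ih
    rw [sigma_succ, hw, Polynomial.mul_comp, Polynomial.X_comp]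
    exact Dvd.dvd.mul_right hdvd _

lemma Hop_pow_single (m : ℕ) (a k : ℕ) (p : ℂ[X]) :
    ((Hop f) ^ m) (Finsupp.single (a, k) p) = Finsupp.single (a, k) ((sigmaIter f a) ^ m * p) := by
  induction m with
  | zero => simp
  | succ s ih =>
    rw [pow_succ', Module.End.mul_apply, ih, Hop_single, ← mul_assoc, ← pow_succ']

lemma aeval_Hop_single (q : ℂ[X]) (a k : ℕ) (p : ℂ[X]) :
    (aeval (Hop f) q) (Finsupp.single (a, k) p) =
      Finsupp.single (a, k) ((q.comp (sigmaIter f a)) * p) := by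
  induction q using Polynomial.induction_on' with
  | add u v hu hv =>
    rw [map_add, LinearMap.add_apply, hu, hv, Polynomial.add_comp, add_mul,
      Finsupp.single_add]
  | monomial m b =>
    rw [aeval_monomial, Module.End.mul_apply, Hop_pow_single,
      Module.algebraMap_end_apply, Finsupp.smul_single,
      ← Polynomial.C_mul_X_pow_eq_monomial, Polynomial.mul_comp, Polynomial.C_comp,
      Polynomial.X_pow_comp, smul_eq_C_mul, mul_assoc]

lemma relA : Hop f * Xop = Xop * aeval (Hop f) f := by
  refine Finsupp.lhom_ext fun c p => ?_
  obtain ⟨a, k⟩ := c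
  rw [Module.End.mul_apply, Module.End.mul_apply, Xop_single, Hop_single,
    aeval_Hop_single, Xop_single, ← sigma_succ']

lemma relB : Yop f * Hop f = aeval (Hop f) f * Yop f := by
  refine Finsupp.lhom_ext fun c p => ?_
  obtain ⟨a, k⟩ := c
  rw [Module.End.mul_apply, Module.End.mul_apply, Hop_single]
  match a with
  | 0 =>
    rw [Yop_single_zero, Yop_single_zero, aeval_Hop_single,
      show sigmaIter f 0 = X from rfl, Polynomial.mul_comp, Polynomial.X_comp,
      Polynomial.comp_X]
  | a + 1 =>
    rw [Yop_single_succ, Yop_single_succ, map_add, aeval_Hop_single, aeval_Hop_single,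
      Polynomial.mul_comp, ← sigma_succ, ← sigma_succ', ← sigma_succ']
    congr 1
    congr 1
    ring

lemma relC : Yop f * Xop = Xop * Yop f + (aeval (Hop f) f - Hop f) := by
  refine Finsupp.lhom_ext fun c p => ?_
  obtain ⟨a, k⟩ := c
  rw [Module.End.mul_apply, LinearMap.add_apply, Module.End.mul_apply,
    LinearMap.sub_apply, Xop_single, Yop_single_succ]
  match a with
  | 0 =>
    rw [Yop_single_zero, Xop_single, aeval_Hop_single, Hop_single, ← Finsupp.single_sub,
      show sigmaIter f 0 = X from rfl, Polynomial.comp_X, sigma_one]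
    congr 1
    congr 1
    ring
  | a + 1 =>
    rw [Yop_single_succ, map_add, Xop_single, Xop_single, aeval_Hop_single, Hop_single,
      ← Finsupp.single_sub]
    have hcomp : (sigmaIter f (a + 1 + 1) - X) * p
        = (sigmaIter f (a + 1) - X) * p
          + (f.comp (sigmaIter f (a + 1)) * p - sigmaIter f (a + 1) * p) := by
      rw [← sigma_succ']
      ring
    rw [hcomp, Finsupp.single_add]
    exact (add_assoc _ _ _).symm

/-- The generators of the representation. -/
def gens : Fin 3 → Module.End ℂ V
  | 0 => Xop
  | 1 => Yop f
  | 2 => Hop f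

/-- The representation of H(f) on V. -/
def rho : GHA f →ₐ[ℂ] Module.End ℂ V :=
  RingQuot.liftAlgHom ℂ ⟨FreeAlgebra.lift ℂ (gens f), by
    intro u v huv
    induction huv with
    | hx =>
      rw [map_mul, map_mul, ← Polynomial.aeval_algHom_apply]
      simp only [FreeAlgebra.lift_ι_apply]
      exact relA f
    | yh =>
      rw [map_mul, map_mul, ← Polynomial.aeval_algHom_apply]
      simp only [FreeAlgebra.lift_ι_apply]
      exact relB f
    | yx =>
      rw [map_mul, map_add, map_mul, map_sub, ← Polynomial.aeval_algHom_apply]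
      simp only [FreeAlgebra.lift_ι_apply]
      exact relC f⟩

lemma rho_mk (s : FreeAlgebra ℂ (Fin 3)) :
    rho f (RingQuot.mkAlgHom ℂ (HeisRel f) s) = FreeAlgebra.lift ℂ (gens f) s :=
  RingQuot.liftAlgHom_mkAlgHom_apply _ _ _ _

@[simp] lemma rho_ghaX : rho f (ghaX f) = Xop := by
  rw [ghaX, rho_mk, FreeAlgebra.lift_ι_apply]; rfl

@[simp] lemma rho_ghaY : rho f (ghaY f) = Yop f := by
  rw [ghaY, rho_mk, FreeAlgebra.lift_ι_apply]; rfl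

@[simp] lemma rho_ghaH : rho f (ghaH f) = Hop f := by
  rw [ghaH, rho_mk, FreeAlgebra.lift_ι_apply]; rfl

/-! ### The invariant submodule -/

/-- Submodule of polynomials divisible by X. -/
def Xdiv : Submodule ℂ ℂ[X] where
  carrier := {p | X ∣ p}
  add_mem' := dvd_add
  zero_mem' := dvd_zero X
  smul_mem' c p hp := by
    rw [Polynomial.smul_eq_C_mul]
    exact hp.mul_left _

/-- The target submodule D = f·ℂ[f] + X·f·ℂ[h]. -/
def Dsub : Submodule ℂ ℂ[X] where
  carrier := {p | ∃ q r : ℂ[X], p = (X * q).comp f + X * f * r}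
  add_mem' := by
    rintro p₁ p₂ ⟨q₁, r₁, rfl⟩ ⟨q₂, r₂, rfl⟩
    exact ⟨q₁ + q₂, r₁ + r₂, by rw [mul_add, Polynomial.add_comp, mul_add]; ring⟩
  zero_mem' := ⟨0, 0, by simp⟩
  smul_mem' c p := by
    rintro ⟨q, r, rfl⟩
    exact ⟨c • q, c • r, by
      rw [smul_add, mul_smul_comm, Polynomial.smul_comp, mul_smul_comm]⟩

lemma Dsub_mul_X {p : ℂ[X]} (hp : p ∈ Dsub f) : X * p ∈ Dsub f := by
  obtain ⟨q, r, rfl⟩ := hp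
  refine ⟨0, q.comp f + X * r, ?_⟩
  simp only [Polynomial.mul_comp, Polynomial.X_comp, Polynomial.zero_comp]
  ring

lemma Dsub_mul_sigma (hdvd : X ∣ f) (a : ℕ) {p : ℂ[X]} (hp : p ∈ Dsub f) :
    sigmaIter f a * p ∈ Dsub f := by
  match a with
  | 0 => exact Dsub_mul_X f hp
  | s + 1 =>
    obtain ⟨w, hw⟩ := X_dvd_sigma f hdvd s
    obtain ⟨q, r, rfl⟩ := hp
    refine ⟨w * (X * q), sigmaIter f (s + 1) * r, ?_⟩
    rw [mul_add]
    congr 1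
    · rw [sigma_succ, hw]
      simp only [Polynomial.mul_comp, Polynomial.X_comp]
      ring
    · ring

lemma Dsub_comp (hdvd : X ∣ f) {p : ℂ[X]} (hp : X ∣ p) : p.comp f ∈ Dsub f := by
  obtain ⟨q, rfl⟩ := hp
  exact ⟨q, 0, by rw [mul_zero, add_zero]⟩

lemma Dsub_dvd (hdvd : X ∣ f) {p : ℂ[X]} (hp : p ∈ Dsub f) : X ∣ p := by
  obtain ⟨q, r, rfl⟩ := hp
  rw [Polynomial.mul_comp, Polynomial.X_comp]
  exact dvd_add (hdvd.mul_right _) ((dvd_mul_right X f).mul_right r)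

lemma X_not_mem_Dsub (hdvd : X ∣ f) (hdeg : f.natDegree ≠ 1) : (X : ℂ[X]) ∉ Dsub f := by
  rintro ⟨q, r, h⟩
  rw [Polynomial.mul_comp, Polynomial.X_comp] at h
  obtain ⟨g, rfl⟩ := hdvd
  by_cases hg : g = 0
  · apply Polynomial.X_ne_zero (R := ℂ)
    rw [h, hg]
    ring
  · have h1 : X * 1 = X * (g * q.comp (X * g) + X * g * r) := by
      linear_combination h
    have h2 : (1 : ℂ[X]) = g * q.comp (X * g) + X * g * r :=
      mul_left_cancel₀ Polynomial.X_ne_zero h1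
    have hu : IsUnit g := IsUnit.of_mul_eq_one (q.comp (X * g) + X * r) (by
      linear_combination -h2)
    apply hdeg
    rw [Polynomial.natDegree_mul Polynomial.X_ne_zero hg,
      Polynomial.natDegree_X, Polynomial.natDegree_eq_zero_of_isUnit hu]

variable (n : ℕ)

/-- Column condition. -/
def U (k : ℕ) : Submodule ℂ ℂ[X] := if k ≤ n then Xdiv else Dsub f

lemma U_dvd (hdvd : X ∣ f) {k : ℕ} {p : ℂ[X]} (hp : p ∈ U f n k) : X ∣ p := by
  unfold U at hp
  split at hp
  · exact hp
  · exact Dsub_dvd f hdvd hp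

lemma U_mul_X (hdvd : X ∣ f) {k : ℕ} {p : ℂ[X]} (hp : p ∈ U f n k) : X * p ∈ U f n k := by
  unfold U at hp ⊢
  split at hp <;> split
  · exact dvd_mul_right X p
  · omega
  · omega
  · exact Dsub_mul_X f hp

lemma U_mul_sigma (hdvd : X ∣ f) (a : ℕ) {k : ℕ} {p : ℂ[X]} (hp : p ∈ U f n k) :
    sigmaIter f a * p ∈ U f n k := by
  unfold U at hp ⊢
  split at hp <;> split
  · exact hp.mul_left _
  · omega
  · omega
  · exact Dsub_mul_sigma f hdvd a hp

lemma U_sigma_sub (hdvd : X ∣ f) (a : ℕ) {k : ℕ} {p : ℂ[X]} (hp : p ∈ U f n k) :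
    (sigmaIter f a - X) * p ∈ U f n k := by
  have h1 := U_mul_sigma f n hdvd a hp
  have h2 := U_mul_X f n hdvd hp
  have := sub_mem h1 h2
  rwa [← sub_mul] at this

lemma U_comp (hdvd : X ∣ f) {k : ℕ} {p : ℂ[X]} (hp : p ∈ U f n k) :
    p.comp f ∈ U f n (k + 1) := by
  have hX : X ∣ p := U_dvd f n hdvd hp
  unfold U
  split
  · obtain ⟨q, rfl⟩ := hX
    rw [Polynomial.mul_comp, Polynomial.X_comp]
    exact (Dvd.dvd.mul_right hdvd _)
  · exact Dsub_comp f hdvd hX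

/-- The invariant submodule of V. -/
def W : Submodule ℂ V where
  carrier := {φ | ∀ c : ℕ × ℕ, φ c ∈ U f n c.2}
  add_mem' := by
    intro φ ψ hφ hψ c
    rw [Finsupp.add_apply]
    exact add_mem (hφ c) (hψ c)
  zero_mem' := by
    intro c
    rw [Finsupp.zero_apply]
    exact zero_mem _
  smul_mem' := by
    intro a φ hφ c
    rw [Finsupp.smul_apply]
    exact Submodule.smul_mem _ a (hφ c)

lemma single_mem_W {c : ℕ × ℕ} {p : ℂ[X]} (hp : p ∈ U f n c.2) :
    Finsupp.single c p ∈ W f n := by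
  intro d
  rw [Finsupp.single_apply]
  split
  · next h => exact h ▸ hp
  · exact zero_mem _

lemma W_decompose {c : ℕ × ℕ} {b : ℂ[X]} {ψ : V} (hc : ψ c = 0)
    (h : Finsupp.single c b + ψ ∈ W f n) : b ∈ U f n c.2 ∧ ψ ∈ W f n := by
  constructor
  · have := h c
    rwa [Finsupp.add_apply, Finsupp.single_eq_same, hc, add_zero] at this
  · intro d
    by_cases hd : d = c
    · rw [hd, hc]; exact zero_mem _
    · have := h d
      rwa [Finsupp.add_apply, Finsupp.single_eq_of_ne' (fun h' => hd h'.symm), zero_add]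
        at this

lemma op_mem_W (T : Module.End ℂ V)
    (hT : ∀ (c : ℕ × ℕ) (b : ℂ[X]), b ∈ U f n c.2 → T (Finsupp.single c b) ∈ W f n) :
    ∀ φ ∈ W f n, T φ ∈ W f n := by
  intro φ
  induction φ using Finsupp.induction with
  | zero => intro _; rw [map_zero]; exact zero_mem _
  | single_add c b ψ hsupp hb ih =>
    intro h
    obtain ⟨h1, h2⟩ := W_decompose f n (Finsupp.notMem_support_iff.mp hsupp) h
    rw [map_add]
    exact add_mem (hT c b h1) (ih h2)

lemma Xop_mem_W : ∀ φ ∈ W f n, Xop φ ∈ W f n := by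
  refine op_mem_W f n _ fun c b hb => ?_
  rw [Xop_single]
  exact single_mem_W f n hb

lemma Hop_mem_W (hdvd : X ∣ f) : ∀ φ ∈ W f n, Hop f φ ∈ W f n := by
  refine op_mem_W f n _ fun c b hb => ?_
  rw [Hop_single]
  exact single_mem_W f n (U_mul_sigma f n hdvd c.1 hb)

lemma Yop_mem_W (hdvd : X ∣ f) : ∀ φ ∈ W f n, Yop f φ ∈ W f n := by
  refine op_mem_W f n _ fun c b hb => ?_
  obtain ⟨a, k⟩ := c
  match a with
  | 0 =>
    rw [Yop_single_zero]
    exact single_mem_W f n (U_comp f n hdvd hb)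
  | a + 1 =>
    rw [Yop_single_succ]
    exact add_mem (single_mem_W f n (U_comp f n hdvd hb))
      (single_mem_W f n (U_sigma_sub f n hdvd (a + 1) hb))

/-- The subalgebra of endomorphisms preserving W. -/
def Wstab : Subalgebra ℂ (Module.End ℂ V) where
  carrier := {T | ∀ φ ∈ W f n, T φ ∈ W f n}
  mul_mem' := by
    intro T S hT hS φ hφ
    exact hT _ (hS _ hφ)
  add_mem' := by
    intro T S hT hS φ hφ
    rw [LinearMap.add_apply]
    exact add_mem (hT _ hφ) (hS _ hφ)
  one_mem' := fun φ hφ => hφ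
  algebraMap_mem' := by
    intro c φ hφ
    rw [Module.algebraMap_end_apply]
    exact Submodule.smul_mem _ _ hφ

lemma rho_mem_Wstab (hdvd : X ∣ f) (r : GHA f) : rho f r ∈ Wstab f n := by
  obtain ⟨s, rfl⟩ := RingQuot.mkAlgHom_surjective ℂ (HeisRel f) r
  rw [rho_mk]
  have hgens : ∀ i : Fin 3, gens f i ∈ Wstab f n := by
    intro i
    fin_cases i
    · exact Xop_mem_W f n
    · exact Yop_mem_W f n hdvd
    · exact Hop_mem_W f n hdvd
  have : FreeAlgebra.lift ℂ (gens f) =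
      (Wstab f n).val.comp (FreeAlgebra.lift ℂ (fun i => (⟨gens f i, hgens i⟩ : Wstab f n))) := by
    apply FreeAlgebra.hom_ext
    funext i
    simp
  rw [this]
  exact ((FreeAlgebra.lift ℂ (fun i => (⟨gens f i, hgens i⟩ : Wstab f n))) s).2

lemma Yop_pow_e0 (i : ℕ) :
    ((Yop f) ^ i) (Finsupp.single ((0 : ℕ), (0 : ℕ)) (1 : ℂ[X])) =
      Finsupp.single (0, i) 1 := by
  induction i with
  | zero => simp
  | succ s ih =>
    rw [pow_succ', Module.End.mul_apply, ih, Yop_single_zero, Polynomial.one_comp]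

end GHAaux

/-- If f ∈ h·ℂ[h] and deg f ≠ 1, then h y^(n+1) ∉ I_n = Σ_{i≤n} H(f)·h y^i,
so the left ideals I_n form a strictly ascending chain. -/
theorem gha_not_noetherian_chain (f : ℂ[X]) (hdvd : X ∣ f) (hdeg : f.natDegree ≠ 1)
    (n : ℕ) :
    ghaH f * (ghaY f) ^ (n + 1) ∉
      Submodule.span (GHA f) {a : GHA f | ∃ i ≤ n, a = ghaH f * (ghaY f) ^ i} := by
  classical
  intro hmem
  open GHAaux in
  have heval : ∀ i : ℕ, rho f (ghaH f * (ghaY f) ^ i)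
      (Finsupp.single ((0 : ℕ), (0 : ℕ)) (1 : ℂ[X])) = Finsupp.single (0, i) X := by
    intro i
    rw [map_mul, map_pow, rho_ghaH, rho_ghaY, Module.End.mul_apply, Yop_pow_e0,
      Hop_single, mul_one]
    rfl
  have hkey : ∀ x ∈ Submodule.span (GHA f) {a : GHA f | ∃ i ≤ n, a = ghaH f * (ghaY f) ^ i},
      rho f x (Finsupp.single ((0 : ℕ), (0 : ℕ)) (1 : ℂ[X])) ∈ W f n := by
    intro x hx
    induction hx using Submodule.span_induction with
    | mem a ha =>
      obtain ⟨i, hi, rfl⟩ := ha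
      rw [heval i]
      refine single_mem_W f n ?_
      unfold U
      rw [if_pos hi]
      exact dvd_rfl
    | zero => rw [map_zero]; exact zero_mem _
    | add a b _ _ hpa hpb => rw [map_add, LinearMap.add_apply]; exact add_mem hpa hpb
    | smul r a _ hpa =>
      rw [smul_eq_mul, map_mul, Module.End.mul_apply]
      exact rho_mem_Wstab f n hdvd r _ hpa
  have hfin := hkey _ hmem
  rw [heval (n + 1)] at hfin
  have := hfin (0, n + 1)
  rw [Finsupp.single_eq_same] at this
  unfold U at this
  rw [if_neg (by omega)] at this
  exact X_not_mem_Dsub f hdvd hdeg this
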